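/- Let w : [0, ∞) → ℝ be Borel measurable with −1/c ≤ w(x) ≤ 0 for all x ≥ 0, and Lipschitz with constant L ≥ 0, i.e. |w(x) − w(y)| ≤ L|x − y| for all x, y ≥ 0. Then J₀w is Lipschitz with constant T + L, where T = (1/λ)(1 + λ/c) + 1/c; that is, |J₀w(φ₁) − J₀w(φ₂)| ≤ (T + L)|φ₁ − φ₂| for all φ₁, φ₂ ≥ 0. -/

import Mathlib

open MeasureTheory Real

/-- Standard Gaussian density on ℝ. -/
noncomputable def gaussDensity (z : ℝ) : ℝ := Real.exp (-z ^ 2 / 2) / Real.sqrt (2 * Real.pi)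

/-- One-step update of the conditional odds process upon observing a normalized
increment `z` after a waiting time `t`, starting from odds `φ`. -/
noncomputable def jfun (lam alp t φ z : ℝ) : ℝ :=
  Real.exp (alp * z * Real.sqrt t + (lam - alp ^ 2 / 2) * t) * φ +
    ∫ u in (0:ℝ)..t, lam * Real.exp ((lam + alp * z / Real.sqrt t) * u - alp ^ 2 * u ^ 2 / (2 * t))


/-- Deterministic evolution of the odds process between observations. -/
noncomputable def varphi (lam t x : ℝ) : ℝ := Real.exp (lam * t) * (x + 1) - 1

/-- The averaging operator `K`: Gaussian expectation of `w` applied to the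
one-step odds update. -/
noncomputable def Kop (lam alp : ℝ) (w : ℝ → ℝ) (t φ : ℝ) : ℝ :=
  ∫ z : ℝ, w (jfun lam alp t φ z) * gaussDensity z

/-- The jump operator `J`: running cost until the next observation at time `t`,
plus the discounted continuation value after that observation. -/
noncomputable def Jop (lam alp c : ℝ) (w : ℝ → ℝ) (t φ : ℝ) : ℝ :=
  (∫ u in (0:ℝ)..t, Real.exp (-(lam * u)) * (varphi lam u φ - lam / c)) +
    (if 0 < t then Real.exp (-(lam * t)) * Kop lam alp w t φ else 0)

/-- The optimized jump operator `J₀ w(φ) = inf_{t ≥ 0} J w(t, φ)`. -/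
noncomputable def J0op (lam alp c : ℝ) (w : ℝ → ℝ) (φ : ℝ) : ℝ :=
  ⨅ t : Set.Ici (0:ℝ), Jop lam alp c w t φ


lemma gaussDensity_nonneg (z : ℝ) : 0 ≤ gaussDensity z := by
  unfold gaussDensity; positivity

lemma gaussDensity_eq (z : ℝ) :
    gaussDensity z = Real.exp (-(1/2) * z ^ 2) / Real.sqrt (2 * Real.pi) := by
  unfold gaussDensity; ring_nf

lemma continuous_gaussDensity : Continuous gaussDensity := by
  unfold gaussDensity; fun_prop

lemma integrable_gaussDensity : Integrable gaussDensity := by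
  have h : Integrable fun z : ℝ ↦ Real.exp (-(1/2) * z ^ 2) :=
    integrable_exp_neg_mul_sq (by norm_num)
  have h2 := h.div_const (Real.sqrt (2 * Real.pi))
  have : gaussDensity = fun z : ℝ ↦ Real.exp (-(1/2) * z ^ 2) / Real.sqrt (2 * Real.pi) := by
    funext z; exact gaussDensity_eq z
  rw [this]; exact h2

lemma integral_gaussDensity : ∫ z, gaussDensity z = 1 := by
  simp only [gaussDensity_eq]
  rw [integral_div, integral_gaussian]
  rw [show Real.pi / (1/2) = 2 * Real.pi by ring]
  rw [div_self]
  positivity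

lemma exp_mul_gaussDensity (a z : ℝ) :
    Real.exp (a * z) * gaussDensity z = Real.exp (a ^ 2 / 2) * gaussDensity (z - a) := by
  unfold gaussDensity
  rw [mul_div_assoc', mul_div_assoc', ← Real.exp_add, ← Real.exp_add,
    show a * z + -z ^ 2 / 2 = a ^ 2 / 2 + -(z - a) ^ 2 / 2 from by ring]

lemma integrable_exp_mul_gaussDensity (a : ℝ) :
    Integrable fun z ↦ Real.exp (a * z) * gaussDensity z := by
  simp only [exp_mul_gaussDensity]
  exact (integrable_gaussDensity.comp_sub_right a).const_mul _

lemma integral_exp_mul_gaussDensity (a : ℝ) :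
    ∫ z, Real.exp (a * z) * gaussDensity z = Real.exp (a ^ 2 / 2) := by
  simp only [exp_mul_gaussDensity]
  rw [integral_const_mul, integral_sub_right_eq_self, integral_gaussDensity, mul_one]



lemma continuous_jfun (lam alp t φ : ℝ) : Continuous fun z ↦ jfun lam alp t φ z := by
  unfold jfun
  apply Continuous.add
  · fun_prop
  · have h : Continuous (Function.uncurry fun (z u : ℝ) ↦
        lam * Real.exp ((lam + alp * z / Real.sqrt t) * u - alp ^ 2 * u ^ 2 / (2 * t))) := by
      apply Continuous.mul continuous_const
      apply Real.continuous_exp.comp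
      fun_prop
    exact intervalIntegral.continuous_parametric_intervalIntegral_of_continuous' h 0 t

lemma jfun_nonneg {lam alp t φ : ℝ} (hlam : 0 < lam) (ht : 0 < t) (hφ : 0 ≤ φ) (z : ℝ) :
    0 ≤ jfun lam alp t φ z := by
  unfold jfun
  apply add_nonneg (mul_nonneg (Real.exp_pos _).le hφ)
  apply intervalIntegral.integral_nonneg ht.le
  exact fun u _ ↦ mul_nonneg hlam.le (Real.exp_pos _).le

lemma jfun_sub (lam alp t φ₁ φ₂ z : ℝ) :
    jfun lam alp t φ₁ z - jfun lam alp t φ₂ z =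
      Real.exp (alp * z * Real.sqrt t + (lam - alp ^ 2 / 2) * t) * (φ₁ - φ₂) := by
  unfold jfun; ring

lemma integral_exp_neg (lam : ℝ) (hlam : 0 < lam) (t : ℝ) :
    ∫ u in (0:ℝ)..t, Real.exp (-(lam * u)) = (1 - Real.exp (-(lam * t))) / lam := by
  have hd : ∀ u ∈ Set.uIcc (0:ℝ) t, HasDerivAt (fun u ↦ -(Real.exp (-(lam * u)) / lam))
      (Real.exp (-(lam * u))) u := by
    intro u _
    have h1 : HasDerivAt (fun u : ℝ ↦ -(lam * u)) (-lam) u := by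
      exact (((hasDerivAt_id u).const_mul lam).neg).congr_deriv (by simp)
    have h2 := h1.exp
    have h3 := (h2.div_const lam).neg
    exact h3.congr_deriv (by rw [mul_neg, neg_div, neg_neg, mul_div_assoc, div_self hlam.ne', mul_one])
  have hint : IntervalIntegrable (fun u ↦ Real.exp (-(lam * u))) volume 0 t := by
    apply Continuous.intervalIntegrable; fun_prop
  rw [intervalIntegral.integral_eq_sub_of_hasDerivAt hd hint]
  simp
  field_simp
  ring

lemma running_integrand (lam c φ : ℝ) (u : ℝ) :
    Real.exp (-(lam * u)) * (varphi lam u φ - lam / c)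
      = (φ + 1) - (1 + lam / c) * Real.exp (-(lam * u)) := by
  unfold varphi
  have h1 : Real.exp (-(lam * u)) * Real.exp (lam * u) = 1 := by
    rw [← Real.exp_add]; simp
  calc Real.exp (-(lam * u)) * (Real.exp (lam * u) * (φ + 1) - 1 - lam / c)
      = (Real.exp (-(lam * u)) * Real.exp (lam * u)) * (φ + 1)
        - (1 + lam / c) * Real.exp (-(lam * u)) := by ring
    _ = (φ + 1) - (1 + lam / c) * Real.exp (-(lam * u)) := by rw [h1]; ring

lemma integral_running (lam c : ℝ) (hlam : 0 < lam) (t φ : ℝ) :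
    (∫ u in (0:ℝ)..t, Real.exp (-(lam * u)) * (varphi lam u φ - lam / c))
      = t * (φ + 1) - (1 + lam / c) * ((1 - Real.exp (-(lam * t))) / lam) := by
  simp only [running_integrand]
  have h1 : IntervalIntegrable (fun _ : ℝ ↦ φ + 1) volume 0 t := intervalIntegrable_const
  have h2 : IntervalIntegrable (fun u ↦ (1 + lam / c) * Real.exp (-(lam * u))) volume 0 t := by
    apply Continuous.intervalIntegrable; fun_prop
  rw [intervalIntegral.integral_sub h1 h2, intervalIntegral.integral_const,
    intervalIntegral.integral_const_mul, integral_exp_neg lam hlam t]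
  simp [smul_eq_mul]


lemma gaussDensity_nonneg' (z : ℝ) : 0 ≤ gaussDensity z := gaussDensity_nonneg z

section
variable {lam alp c t φ : ℝ} {w : ℝ → ℝ}

lemma integrable_w_jfun (hlam : 0 < lam) (hc : 0 < c) (hw : Measurable w)
    (hwl : ∀ x : ℝ, 0 ≤ x → -1 / c ≤ w x) (hwu : ∀ x : ℝ, 0 ≤ x → w x ≤ 0)
    (ht : 0 < t) (hφ : 0 ≤ φ) :
    Integrable fun z ↦ w (jfun lam alp t φ z) * gaussDensity z := by
  have hγ : Integrable gaussDensity := integrable_gaussDensity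
  apply Integrable.mono' (hγ.const_mul (1 / c))
  · exact ((hw.comp (continuous_jfun lam alp t φ).measurable).mul
      continuous_gaussDensity.measurable).aestronglyMeasurable
  · filter_upwards with z
    rw [norm_mul, Real.norm_eq_abs, Real.norm_eq_abs, abs_of_nonneg (gaussDensity_nonneg' z)]
    apply mul_le_mul_of_nonneg_right _ (gaussDensity_nonneg' z)
    rw [abs_le]
    have h0 := jfun_nonneg (alp := alp) hlam ht hφ z
    constructor
    · have := hwl _ h0; rw [neg_div] at this; linarith
    · have := hwu _ h0
      have : w (jfun lam alp t φ z) ≤ 1 / c := le_trans this (by positivity)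
      linarith [this]

lemma Kop_ge (hlam : 0 < lam) (hc : 0 < c) (hw : Measurable w)
    (hwl : ∀ x : ℝ, 0 ≤ x → -1 / c ≤ w x) (hwu : ∀ x : ℝ, 0 ≤ x → w x ≤ 0)
    (ht : 0 < t) (hφ : 0 ≤ φ) :
    -1 / c ≤ Kop lam alp w t φ := by
  have h1 : ∫ z, (-1 / c) * gaussDensity z = -1 / c := by
    rw [integral_const_mul, integral_gaussDensity, mul_one]
  rw [← h1]
  apply integral_mono (integrable_gaussDensity.const_mul _)
    (integrable_w_jfun hlam hc hw hwl hwu ht hφ)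
  intro z
  exact mul_le_mul_of_nonneg_right (hwl _ (jfun_nonneg hlam ht hφ z)) (gaussDensity_nonneg' z)

lemma Kop_le (hlam : 0 < lam) (hc : 0 < c) (hw : Measurable w)
    (hwl : ∀ x : ℝ, 0 ≤ x → -1 / c ≤ w x) (hwu : ∀ x : ℝ, 0 ≤ x → w x ≤ 0)
    (ht : 0 < t) (hφ : 0 ≤ φ) :
    Kop lam alp w t φ ≤ 0 := by
  have := integral_nonpos (μ := volume)
    (f := fun z ↦ w (jfun lam alp t φ z) * gaussDensity z) ?_
  · exact this
  · intro z
    exact mul_nonpos_of_nonpos_of_nonneg (hwu _ (jfun_nonneg hlam ht hφ z))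
      (gaussDensity_nonneg' z)

lemma Kop_sub_le (hlam : 0 < lam) (hc : 0 < c) (hw : Measurable w)
    (hwl : ∀ x : ℝ, 0 ≤ x → -1 / c ≤ w x) (hwu : ∀ x : ℝ, 0 ≤ x → w x ≤ 0)
    {L : ℝ} (hL : 0 ≤ L)
    (hLip : ∀ x y : ℝ, 0 ≤ x → 0 ≤ y → |w x - w y| ≤ L * |x - y|)
    (ht : 0 < t) {φ₁ φ₂ : ℝ} (hφ₁ : 0 ≤ φ₁) (hφ₂ : 0 ≤ φ₂) :
    |Kop lam alp w t φ₁ - Kop lam alp w t φ₂|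
      ≤ L * |φ₁ - φ₂| * Real.exp (lam * t) := by
  have hi₁ := integrable_w_jfun (alp := alp) hlam hc hw hwl hwu ht hφ₁
  have hi₂ := integrable_w_jfun (alp := alp) hlam hc hw hwl hwu ht hφ₂
  have hdiff : Kop lam alp w t φ₁ - Kop lam alp w t φ₂
      = ∫ z, (w (jfun lam alp t φ₁ z) - w (jfun lam alp t φ₂ z)) * gaussDensity z := by
    unfold Kop
    rw [← integral_sub hi₁ hi₂]
    congr 1; funext z; ring
  rw [hdiff]
  set a := alp * Real.sqrt t with ha
  have hg : Integrable fun z ↦ (L * |φ₁ - φ₂| * Real.exp ((lam - alp ^ 2 / 2) * t)) *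
      (Real.exp (a * z) * gaussDensity z) :=
    (integrable_exp_mul_gaussDensity a).const_mul _
  have hbound : ∀ z : ℝ, ‖(w (jfun lam alp t φ₁ z) - w (jfun lam alp t φ₂ z)) * gaussDensity z‖
      ≤ (L * |φ₁ - φ₂| * Real.exp ((lam - alp ^ 2 / 2) * t)) *
        (Real.exp (a * z) * gaussDensity z) := by
    intro z
    rw [norm_mul, Real.norm_eq_abs, Real.norm_eq_abs, abs_of_nonneg (gaussDensity_nonneg' z)]
    have h1 := hLip _ _ (jfun_nonneg (alp := alp) hlam ht hφ₁ z) (jfun_nonneg (alp := alp) hlam ht hφ₂ z)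
    have h2 : |jfun lam alp t φ₁ z - jfun lam alp t φ₂ z|
        = Real.exp (alp * z * Real.sqrt t + (lam - alp ^ 2 / 2) * t) * |φ₁ - φ₂| := by
      rw [jfun_sub, abs_mul, abs_of_pos (Real.exp_pos _)]
    have h3 : Real.exp (alp * z * Real.sqrt t + (lam - alp ^ 2 / 2) * t)
        = Real.exp ((lam - alp ^ 2 / 2) * t) * Real.exp (a * z) := by
      rw [← Real.exp_add, ha]; ring_nf
    calc |w (jfun lam alp t φ₁ z) - w (jfun lam alp t φ₂ z)| * gaussDensity z
        ≤ (L * |jfun lam alp t φ₁ z - jfun lam alp t φ₂ z|) * gaussDensity z :=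
          mul_le_mul_of_nonneg_right h1 (gaussDensity_nonneg' z)
      _ = (L * |φ₁ - φ₂| * Real.exp ((lam - alp ^ 2 / 2) * t)) *
          (Real.exp (a * z) * gaussDensity z) := by rw [h2, h3]; ring
  have := norm_integral_le_of_norm_le hg (Filter.Eventually.of_forall hbound)
  rw [Real.norm_eq_abs] at this
  refine this.trans ?_
  rw [integral_const_mul, integral_exp_mul_gaussDensity]
  have hsq : a ^ 2 = alp ^ 2 * t := by
    rw [ha, mul_pow, Real.sq_sqrt ht.le]
  rw [mul_assoc, ← Real.exp_add,
    show (lam - alp ^ 2 / 2) * t + a ^ 2 / 2 = lam * t by rw [hsq]; ring]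

end



section
variable {lam alp c : ℝ} {w : ℝ → ℝ}

lemma Jop_zero (φ : ℝ) : Jop lam alp c w 0 φ = 0 := by
  unfold Jop; simp

lemma Jop_lower (hlam : 0 < lam) (hc : 0 < c) (hw : Measurable w)
    (hwl : ∀ x : ℝ, 0 ≤ x → -1 / c ≤ w x) (hwu : ∀ x : ℝ, 0 ≤ x → w x ≤ 0)
    {t φ : ℝ} (ht : 0 ≤ t) (hφ : 0 ≤ φ) :
    t - ((1 / lam) * (1 + lam / c) + 1 / c) ≤ Jop lam alp c w t φ := by
  have hT : 0 ≤ (1 / lam) * (1 + lam / c) + 1 / c := by positivity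
  rcases eq_or_lt_of_le ht with h | h
  · rw [← h, Jop_zero]; linarith
  · unfold Jop
    rw [if_pos h, integral_running lam c hlam t φ]
    have hK := Kop_ge (alp := alp) hlam hc hw hwl hwu h hφ
    have he1 : Real.exp (-(lam * t)) ≤ 1 :=
      Real.exp_le_one_iff.mpr (by nlinarith)
    have he0 : (0:ℝ) < Real.exp (-(lam * t)) := Real.exp_pos _
    have h1 : t ≤ t * (φ + 1) := by nlinarith
    have h2 : (1 + lam / c) * ((1 - Real.exp (-(lam * t))) / lam)
        ≤ (1 + lam / c) * (1 / lam) := by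
      apply mul_le_mul_of_nonneg_left _ (by positivity)
      exact (div_le_div_iff_of_pos_right hlam).mpr (by linarith)
    have h3 : -(1 / c) ≤ Real.exp (-(lam * t)) * Kop lam alp w t φ := by
      have h4 := mul_le_mul_of_nonneg_left hK he0.le
      have h5 : 0 ≤ (1 - Real.exp (-(lam * t))) * (1 / c) :=
        mul_nonneg (by linarith) (by positivity)
      have h6 : Real.exp (-(lam * t)) * (-1 / c) = -(Real.exp (-(lam * t)) * (1 / c)) := by ring
      nlinarith
    nlinarith [h1, h2, h3]

lemma Jop_lip (hlam : 0 < lam) (hc : 0 < c) (hw : Measurable w)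
    (hwl : ∀ x : ℝ, 0 ≤ x → -1 / c ≤ w x) (hwu : ∀ x : ℝ, 0 ≤ x → w x ≤ 0)
    {L : ℝ} (hL : 0 ≤ L)
    (hLip : ∀ x y : ℝ, 0 ≤ x → 0 ≤ y → |w x - w y| ≤ L * |x - y|)
    {t φ₁ φ₂ : ℝ} (ht : 0 ≤ t) (hφ₁ : 0 ≤ φ₁) (hφ₂ : 0 ≤ φ₂) :
    |Jop lam alp c w t φ₁ - Jop lam alp c w t φ₂| ≤ (t + L) * |φ₁ - φ₂| := by
  rcases eq_or_lt_of_le ht with h | h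
  · rw [← h, Jop_zero, Jop_zero]
    simp only [sub_zero, abs_zero]
    positivity
  · have hK := Kop_sub_le (alp := alp) hlam hc hw hwl hwu hL hLip h hφ₁ hφ₂
    unfold Jop
    rw [if_pos h, if_pos h, integral_running lam c hlam t φ₁, integral_running lam c hlam t φ₂]
    have key : t * (φ₁ + 1) - (1 + lam / c) * ((1 - Real.exp (-(lam * t))) / lam) +
          Real.exp (-(lam * t)) * Kop lam alp w t φ₁ -
        (t * (φ₂ + 1) - (1 + lam / c) * ((1 - Real.exp (-(lam * t))) / lam) +
          Real.exp (-(lam * t)) * Kop lam alp w t φ₂)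
        = t * (φ₁ - φ₂) +
          Real.exp (-(lam * t)) * (Kop lam alp w t φ₁ - Kop lam alp w t φ₂) := by ring
    rw [key]
    calc |t * (φ₁ - φ₂) + Real.exp (-(lam * t)) *
            (Kop lam alp w t φ₁ - Kop lam alp w t φ₂)|
        ≤ |t * (φ₁ - φ₂)| + |Real.exp (-(lam * t)) *
            (Kop lam alp w t φ₁ - Kop lam alp w t φ₂)| := abs_add_le _ _
      _ = t * |φ₁ - φ₂| + Real.exp (-(lam * t)) *
            |Kop lam alp w t φ₁ - Kop lam alp w t φ₂| := by
          rw [abs_mul, abs_mul, abs_of_nonneg ht, abs_of_pos (Real.exp_pos _)]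
      _ ≤ t * |φ₁ - φ₂| + Real.exp (-(lam * t)) * (L * |φ₁ - φ₂| * Real.exp (lam * t)) := by
          have := mul_le_mul_of_nonneg_left hK (Real.exp_pos (-(lam * t))).le
          linarith
      _ = t * |φ₁ - φ₂| + (Real.exp (-(lam * t)) * Real.exp (lam * t)) * (L * |φ₁ - φ₂|) := by
          ring
      _ = (t + L) * |φ₁ - φ₂| := by
          rw [← Real.exp_add, neg_add_cancel, Real.exp_zero]; ring

end

/-- If `w` is valued in `[−1/c, 0]` and `L`-Lipschitz on `[0, ∞)`, then `J₀w` is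
`(T + L)`-Lipschitz on `[0, ∞)`, where `T = (1/λ)(1 + λ/c) + 1/c`. -/
theorem J0op_lipschitz (lam alp c : ℝ) (hlam : 0 < lam) (halp : 0 < alp) (hc : 0 < c)
    (w : ℝ → ℝ) (hw : Measurable w)
    (hwl : ∀ x : ℝ, 0 ≤ x → -1 / c ≤ w x) (hwu : ∀ x : ℝ, 0 ≤ x → w x ≤ 0)
    (L : ℝ) (hL : 0 ≤ L)
    (hLip : ∀ x y : ℝ, 0 ≤ x → 0 ≤ y → |w x - w y| ≤ L * |x - y|) :
    ∀ φ₁ φ₂ : ℝ, 0 ≤ φ₁ → 0 ≤ φ₂ →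
      |J0op lam alp c w φ₁ - J0op lam alp c w φ₂| ≤
        ((1 / lam) * (1 + lam / c) + 1 / c + L) * |φ₁ - φ₂| := by
  intro φ₁ φ₂ hφ₁ hφ₂
  set T : ℝ := (1 / lam) * (1 + lam / c) + 1 / c with hTdef
  haveI : Nonempty (Set.Ici (0:ℝ)) := ⟨⟨0, Set.self_mem_Ici⟩⟩
  have hT : 0 ≤ T := by rw [hTdef]; positivity
  have bdd : ∀ φ : ℝ, 0 ≤ φ →
      BddBelow (Set.range fun s : Set.Ici (0:ℝ) ↦ Jop lam alp c w s φ) := by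
    intro φ hφ
    refine ⟨-T, ?_⟩
    rintro x ⟨s, rfl⟩
    have h1 := Jop_lower (alp := alp) hlam hc hw hwl hwu s.2 hφ
    have h2 : (0:ℝ) ≤ (s:ℝ) := s.2
    simp only [hTdef] at *
    linarith
  have hle : ∀ φ ψ : ℝ, 0 ≤ φ → 0 ≤ ψ →
      J0op lam alp c w φ ≤ J0op lam alp c w ψ + (T + L) * |φ - ψ| := by
    intro φ ψ hφ hψ
    have hD : 0 ≤ (T + L) * |φ - ψ| := mul_nonneg (by linarith) (abs_nonneg _)
    have key : ∀ s : Set.Ici (0:ℝ),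
        J0op lam alp c w φ - (T + L) * |φ - ψ| ≤ Jop lam alp c w s ψ := by
      intro s
      rcases le_or_gt (s:ℝ) T with hs | hs
      · have h1 : J0op lam alp c w φ ≤ Jop lam alp c w s φ := ciInf_le (bdd φ hφ) s
        have h2 := Jop_lip (alp := alp) hlam hc hw hwl hwu hL hLip s.2 hφ hψ
        have h3 : ((s:ℝ) + L) * |φ - ψ| ≤ (T + L) * |φ - ψ| :=
          mul_le_mul_of_nonneg_right (by linarith) (abs_nonneg _)
        have h4 := (abs_sub_le_iff.mp h2).1
        linarith
      · have h0 : J0op lam alp c w φ ≤ Jop lam alp c w ((⟨0, Set.self_mem_Ici⟩ : Set.Ici (0:ℝ)) : Set.Ici (0:ℝ)) φ :=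
          ciInf_le (bdd φ hφ) _
        rw [show ((⟨0, Set.self_mem_Ici⟩ : Set.Ici (0:ℝ)) : ℝ) = (0:ℝ) from rfl, Jop_zero] at h0
        have h4 := Jop_lower (alp := alp) hlam hc hw hwl hwu s.2 hψ
        simp only [hTdef] at hs h4 hD ⊢
        linarith
    have h5 : J0op lam alp c w φ - (T + L) * |φ - ψ| ≤ J0op lam alp c w ψ := by
      rw [J0op]
      exact le_ciInf key
    linarith
  have ha := hle φ₁ φ₂ hφ₁ hφ₂
  have hb := hle φ₂ φ₁ hφ₂ hφ₁
  rw [abs_sub_comm φ₂ φ₁] at hb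
  rw [abs_sub_le_iff]
  constructor <;> linarith
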